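/- Under the setting of the similarity cover bound, if η ≤ 1 − max{2·log(4k/δ)/n, √(log(4N_η/δ)/(2n))}, then with probability at least 1 − δ, max_{1≤i≤k} |Ê_S[q_i] − E_D[q_i]| ≤ max{√(2·log(4N_η/δ)/n), √(32(1−η)·log(4k/δ)/n)}. -/

import Mathlib

open MeasureTheory ProbabilityTheory Real


lemma bdd_integrable {Z : Type*} [MeasurableSpace Z] (D : Measure Z) [IsFiniteMeasure D]
    {f : Z → ℝ} (hf : Measurable f) (C : ℝ) (hb : ∀ z, |f z| ≤ C) : Integrable f D :=
  (integrable_const C).mono' hf.aestronglyMeasurable (ae_of_all _ fun z => hb z)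

lemma bern_hoeffding {p l : ℝ} (hp0 : 0 ≤ p) (hp1 : p ≤ 1) (hl : 0 ≤ l) :
    Real.exp (-(l * p)) * (1 + p * (Real.exp l - 1)) ≤ Real.exp (l ^ 2 / 8) := by
  -- g x = 1 - p + p * exp x > 0
  have hg : ∀ x : ℝ, 0 < 1 - p + p * Real.exp x := by
    intro x
    rcases eq_or_lt_of_le hp0 with h | h
    · simp [← h]
    · nlinarith [Real.exp_pos x, sub_nonneg.mpr hp1]
  set F : ℝ → ℝ := fun x => x ^ 2 / 8 + x * p - Real.log (1 - p + p * Real.exp x) with hF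
  set F' : ℝ → ℝ := fun x => x / 4 + p - p * Real.exp x / (1 - p + p * Real.exp x) with hF'
  set F'' : ℝ → ℝ := fun x => 1 / 4 -
    (p * Real.exp x * (1 - p + p * Real.exp x) - p * Real.exp x * (p * Real.exp x)) /
      (1 - p + p * Real.exp x) ^ 2 with hF''
  have hgd : ∀ x : ℝ, HasDerivAt (fun x => 1 - p + p * Real.exp x) (p * Real.exp x) x := by
    intro x
    simpa using ((Real.hasDerivAt_exp x).const_mul p).const_add (1 - p)
  have hFd : ∀ x : ℝ, HasDerivAt F (F' x) x := by
    intro x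
    have h1 : HasDerivAt (fun x : ℝ => x ^ 2 / 8 + x * p) (x / 4 + p) x := by
      have := ((hasDerivAt_pow 2 x).div_const 8).add ((hasDerivAt_id x).mul_const p)
      exact this.congr_deriv (by ring)
    have h2 : HasDerivAt (fun x => Real.log (1 - p + p * Real.exp x))
        (p * Real.exp x / (1 - p + p * Real.exp x)) x := (hgd x).log (hg x).ne'
    exact h1.sub h2
  have hF'd : ∀ x : ℝ, HasDerivAt F' (F'' x) x := by
    intro x
    have h1 : HasDerivAt (fun x : ℝ => x / 4 + p) (1 / 4) x := by
      simpa using ((hasDerivAt_id x).div_const 4).add_const p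
    have h2 : HasDerivAt (fun x => p * Real.exp x / (1 - p + p * Real.exp x))
        ((p * Real.exp x * (1 - p + p * Real.exp x) - p * Real.exp x * (p * Real.exp x)) /
          (1 - p + p * Real.exp x) ^ 2) x :=
      ((Real.hasDerivAt_exp x).const_mul p).div (hgd x) (hg x).ne'
    exact (h1.sub h2).congr_deriv (by rw [hF''])
  have hF''nonneg : ∀ x : ℝ, 0 ≤ F'' x := by
    intro x
    have h := hg x
    have hA : 0 ≤ p * Real.exp x := mul_nonneg hp0 (Real.exp_pos x).le
    rw [hF'']
    rw [sub_nonneg, div_le_iff₀ (by positivity)]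
    nlinarith [sq_nonneg (1 - p - p * Real.exp x)]
  -- F' is monotone on ℝ, so on [0, ∞) F' ≥ F' 0 = 0.
  have hF'mono : Monotone F' := by
    have : ∀ x, 0 ≤ deriv F' x := fun x => by rw [(hF'd x).deriv]; exact hF''nonneg x
    exact monotone_of_deriv_nonneg (fun x => (hF'd x).differentiableAt) this
  have hF'0 : F' 0 = 0 := by simp [hF']
  have hFmono : MonotoneOn F (Set.Ici 0) := by
    refine monotoneOn_of_deriv_nonneg (convex_Ici 0)
      (fun x _ => (hFd x).differentiableAt.continuousAt.continuousWithinAt) ?_ ?_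
    · intro x hx
      exact (hFd x).differentiableAt.differentiableWithinAt
    · intro x hx
      rw [(hFd x).deriv]
      rw [interior_Ici] at hx
      have := hF'mono (le_of_lt hx)
      rw [hF'0] at this
      exact this
  have hF0 : F 0 = 0 := by simp [hF]
  have hFl : 0 ≤ F l := by
    have := hFmono (Set.self_mem_Ici) (Set.mem_Ici.mpr hl) hl
    rw [hF0] at this; exact this
  have hgl := hg l
  have hkey : Real.log (1 - p + p * Real.exp l) - l * p ≤ l ^ 2 / 8 := by
    rw [hF] at hFl; simp only at hFl; linarith
  calc Real.exp (-(l * p)) * (1 + p * (Real.exp l - 1))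
      = Real.exp (Real.log (1 - p + p * Real.exp l) - l * p) := by
        rw [Real.exp_sub, Real.exp_log hgl, Real.exp_neg]
        ring
    _ ≤ Real.exp (l ^ 2 / 8) := Real.exp_le_exp.mpr hkey

lemma tail_bound {Z : Type*} [MeasurableSpace Z] (D : Measure Z) [IsProbabilityMeasure D]
    (n : ℕ) (g : Z → ℝ) (hg : Measurable g) (C : ℝ) (hb : ∀ z, |g z| ≤ C)
    (l s : ℝ) (hl : 0 ≤ l) :
    ((Measure.pi fun _ : Fin n => D) {ω | (n : ℝ) * s ≤ ∑ j, g (ω j)}).toReal ≤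
      (Real.exp (-(l * s)) * ∫ z, Real.exp (l * g z) ∂D) ^ n := by
  letI : MeasureSpace Z := ⟨D⟩
  have hvol : (Measure.pi fun _ : Fin n => D) = (volume : Measure (Fin n → Z)) := rfl
  set X : (Fin n → Z) → ℝ := fun ω => ∑ j, g (ω j) with hX
  have hXm : Measurable X :=
    Finset.measurable_sum _ (fun j _ => hg.comp (measurable_pi_apply j))
  have h_int : Integrable (fun ω => Real.exp (l * X ω)) (volume : Measure (Fin n → Z)) := by
    refine (integrable_const (Real.exp (l * (n * C)))).mono'
      ((hXm.const_mul l).exp.aestronglyMeasurable) (ae_of_all _ fun ω => ?_)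
    rw [Real.norm_eq_abs, abs_of_pos (Real.exp_pos _)]
    refine Real.exp_le_exp.mpr (mul_le_mul_of_nonneg_left ?_ hl)
    calc X ω ≤ ∑ j, |g (ω j)| := Finset.sum_le_sum fun j _ => le_abs_self _
      _ ≤ ∑ _j : Fin n, C := Finset.sum_le_sum fun j _ => hb _
      _ = n * C := by simp [mul_comm]
  have hmgf : mgf X volume l = (∫ z, Real.exp (l * g z) ∂D) ^ n := by
    have : ∀ ω : Fin n → Z, Real.exp (l * X ω) = ∏ j, Real.exp (l * g (ω j)) := by
      intro ω
      rw [hX, Finset.mul_sum, Real.exp_sum]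
    rw [mgf]
    simp only [this]
    have := MeasureTheory.integral_fintype_prod_eq_pow (ι := Fin n)
      (fun z => Real.exp (l * g z)) (𝕜 := ℝ) (μ := D)
    rw [Fintype.card_fin] at this
    exact this
  have h := measure_ge_le_exp_mul_mgf (μ := (volume : Measure (Fin n → Z))) (X := X)
    ((n : ℝ) * s) hl h_int
  rw [hvol]
  refine h.trans (le_of_eq ?_)
  rw [hmgf, mul_pow, ← Real.exp_nat_mul]
  ring_nf


-- elementary exponential estimates

lemma cover_tail {Z : Type*} [MeasurableSpace Z] (D : Measure Z) [IsProbabilityMeasure D]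
    (n : ℕ) (m : Z → ℝ) (hm : Measurable m) (hv : ∀ z, m z = 0 ∨ m z = 1)
    (a : ℝ) (ha : 0 ≤ a) :
    ((Measure.pi fun _ : Fin n => D)
      {ω | (n : ℝ) * a ≤ ∑ j, (m (ω j) - ∫ z, m z ∂D)}).toReal ≤
      Real.exp (-(2 * n * a ^ 2)) := by
  set p := ∫ z, m z ∂D with hp
  have hmb : ∀ z, |m z| ≤ 1 := by
    intro z; rcases hv z with h | h <;> rw [h] <;> norm_num
  have hint : Integrable m D := bdd_integrable D hm 1 hmb
  have hp0 : 0 ≤ p := integral_nonneg fun z => by rcases hv z with h | h <;> rw [h] <;> norm_num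
  have hp1 : p ≤ 1 := by
    calc p ≤ ∫ _z, (1 : ℝ) ∂D := by
          refine integral_mono hint (integrable_const 1) fun z => ?_
          rcases hv z with h | h <;> rw [h] <;> norm_num
      _ = 1 := by simp
  have hgb : ∀ z, |m z - p| ≤ 2 := by
    intro z
    have := hmb z
    rw [abs_le] at *
    constructor <;> linarith
  have key := tail_bound D n (fun z => m z - p) (hm.sub_const p) 2 hgb (4 * a) a
    (by positivity)
  refine key.trans ?_
  have hI : (∫ z, Real.exp (4 * a * (m z - p)) ∂D) =
      Real.exp (-(4 * a * p)) * (1 + p * (Real.exp (4 * a) - 1)) := by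
    have hpt : ∀ z, Real.exp (4 * a * (m z - p)) =
        Real.exp (-(4 * a * p)) * (1 + (Real.exp (4 * a) - 1) * m z) := by
      intro z
      rcases hv z with h | h <;> rw [h]
      · rw [mul_zero, add_zero, mul_one]
        congr 1; ring
      · rw [mul_one]
        have h2 : (1 : ℝ) + (Real.exp (4 * a) - 1) = Real.exp (4 * a) := by ring
        rw [h2, ← Real.exp_add]
        congr 1; ring
    calc (∫ z, Real.exp (4 * a * (m z - p)) ∂D)
        = ∫ z, Real.exp (-(4 * a * p)) * (1 + (Real.exp (4 * a) - 1) * m z) ∂D := by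
          exact integral_congr_ae (ae_of_all _ hpt)
      _ = Real.exp (-(4 * a * p)) * (1 + (Real.exp (4 * a) - 1) * p) := by
          rw [MeasureTheory.integral_const_mul,
            integral_add (integrable_const 1) (hint.const_mul _),
            MeasureTheory.integral_const_mul, integral_const]
          simp [hp]
      _ = Real.exp (-(4 * a * p)) * (1 + p * (Real.exp (4 * a) - 1)) := by ring
  have hbase : Real.exp (-(4 * a * a)) * (∫ z, Real.exp (4 * a * (m z - p)) ∂D) ≤
      Real.exp (-(2 * a ^ 2)) := by
    rw [hI]
    have hB := bern_hoeffding (l := 4 * a) hp0 hp1 (by positivity)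
    calc Real.exp (-(4 * a * a)) *
          (Real.exp (-(4 * a * p)) * (1 + p * (Real.exp (4 * a) - 1)))
        ≤ Real.exp (-(4 * a * a)) * Real.exp ((4 * a) ^ 2 / 8) := by
          exact mul_le_mul_of_nonneg_left hB (Real.exp_pos _).le
      _ = Real.exp (-(2 * a ^ 2)) := by rw [← Real.exp_add]; congr 1; ring
  have hbase0 : 0 ≤ Real.exp (-(4 * a * a)) * (∫ z, Real.exp (4 * a * (m z - p)) ∂D) := by
    have : 0 ≤ ∫ z, Real.exp (4 * a * (m z - p)) ∂D :=
      integral_nonneg fun z => (Real.exp_pos _).le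
    positivity
  calc (Real.exp (-(4 * a * a)) * ∫ z, Real.exp (4 * a * (m z - p)) ∂D) ^ n
      ≤ (Real.exp (-(2 * a ^ 2))) ^ n := pow_le_pow_left₀ hbase0 hbase n
    _ = Real.exp (-(2 * n * a ^ 2)) := by
        rw [← Real.exp_nat_mul]; congr 1; ring


/-- Hoeffding's lemma, Bernoulli case. -/

lemma exp_quad_upper {l : ℝ} (hl0 : 0 ≤ l) (hl2 : l ≤ 1 / 2) :
    Real.exp l - 1 - l ≤ 2 * l ^ 2 := by
  have h1 : 1 - l ≤ Real.exp (-l) := by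
    have := Real.add_one_le_exp (-l); linarith
  have h2 : Real.exp l * Real.exp (-l) = 1 := by
    rw [← Real.exp_add]; simp
  have h3 : Real.exp l * (1 - l) ≤ 1 := by
    calc Real.exp l * (1 - l) ≤ Real.exp l * Real.exp (-l) :=
          mul_le_mul_of_nonneg_left h1 (Real.exp_pos l).le
      _ = 1 := h2
  nlinarith [Real.exp_pos l]

lemma exp_neg_quad_upper {l : ℝ} (hl0 : 0 ≤ l) :
    Real.exp (-l) - 1 + l ≤ 2 * l ^ 2 := by
  have h1 : 1 + l ≤ Real.exp l := by linarith [Real.add_one_le_exp l]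
  have h2 : Real.exp l * Real.exp (-l) = 1 := by
    rw [← Real.exp_add]; simp
  have h3 : (1 + l) * Real.exp (-l) ≤ 1 := by
    calc (1 + l) * Real.exp (-l) ≤ Real.exp l * Real.exp (-l) :=
          mul_le_mul_of_nonneg_right h1 (Real.exp_pos _).le
      _ = 1 := h2
  nlinarith [Real.exp_pos (-l)]

lemma diff_tail {Z : Type*} [MeasurableSpace Z] (D : Measure Z) [IsProbabilityMeasure D]
    (n : ℕ) (Y : Z → ℝ) (hm : Measurable Y)
    (hv : ∀ z, Y z = -1 ∨ Y z = 0 ∨ Y z = 1) (u t : ℝ) (hu : 0 < u)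
    (habs : (∫ z, |Y z| ∂D) ≤ u) (ht0 : 0 ≤ t) (ht2 : t ≤ 2 * u) :
    ((Measure.pi fun _ : Fin n => D)
      {ω | (n : ℝ) * t ≤ ∑ j, (Y (ω j) - ∫ z, Y z ∂D)}).toReal ≤
      Real.exp (-((n : ℝ) * t ^ 2 / (8 * u))) := by
  set l := t / (4 * u) with hldef
  have hl0 : 0 ≤ l := by positivity
  have hl2 : l ≤ 1 / 2 := by
    rw [hldef, div_le_iff₀ (by positivity)]
    linarith
  have hYb : ∀ z, |Y z| ≤ 1 := by
    intro z; rcases hv z with h | h | h <;> rw [h] <;> norm_num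
  have hYint : Integrable Y D := bdd_integrable D hm 1 hYb
  set p := ∫ z, Y z ∂D with hpdef
  have hpb : |p| ≤ 1 := by
    calc |p| ≤ ∫ z, |Y z| ∂D := by
          simpa [Real.norm_eq_abs] using
            norm_integral_le_integral_norm (μ := D) (f := Y)
      _ ≤ ∫ _z, (1 : ℝ) ∂D := integral_mono hYint.abs (integrable_const 1) hYb
      _ = 1 := by simp
  have hgb : ∀ z, |Y z - p| ≤ 2 := by
    intro z
    have h1 := hYb z
    rw [abs_le] at *
    rcases hpb with ⟨hpl, hpu⟩
    constructor <;> linarith [h1.1, h1.2]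
  -- the positive and negative parts
  set A := ∫ z, max (Y z) 0 ∂D with hAdef
  set B := ∫ z, max (-Y z) 0 ∂D with hBdef
  have hmaxm : Measurable fun z => max (Y z) 0 := hm.max measurable_const
  have hmaxm' : Measurable fun z => max (-Y z) 0 := hm.neg.max measurable_const
  have hmaxb : ∀ z, |max (Y z) 0| ≤ 1 := by
    intro z
    rw [abs_le]
    constructor
    · linarith [le_max_right (Y z) 0]
    · exact max_le (by linarith [(abs_le.mp (hYb z)).2]) one_pos.le
  have hmaxb' : ∀ z, |max (-Y z) 0| ≤ 1 := by
    intro z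
    rw [abs_le]
    constructor
    · linarith [le_max_right (-Y z) 0]
    · exact max_le (by linarith [(abs_le.mp (hYb z)).1]) one_pos.le
  have hAint : Integrable (fun z => max (Y z) 0) D := bdd_integrable D hmaxm 1 hmaxb
  have hBint : Integrable (fun z => max (-Y z) 0) D := bdd_integrable D hmaxm' 1 hmaxb'
  have hA0 : 0 ≤ A := integral_nonneg fun z => le_max_right _ _
  have hB0 : 0 ≤ B := integral_nonneg fun z => le_max_right _ _
  have hAB : A + B ≤ u := by
    have : A + B = ∫ z, |Y z| ∂D := by
      rw [hAdef, hBdef, ← integral_add hAint hBint]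
      refine integral_congr_ae (ae_of_all _ fun z => ?_)
      show max (Y z) 0 + max (-Y z) 0 = |Y z|
      rcases hv z with h | h | h <;> rw [h] <;> norm_num
    rw [this]; exact habs
  have hpAB : p = A - B := by
    rw [hpdef, hAdef, hBdef, ← integral_sub hAint hBint]
    refine integral_congr_ae (ae_of_all _ fun z => ?_)
    show Y z = max (Y z) 0 - max (-Y z) 0
    rcases hv z with h | h | h <;> rw [h] <;> norm_num
  have key := tail_bound D n (fun z => Y z - p) (hm.sub_const p) 2 hgb l t hl0
  refine key.trans ?_
  -- compute/bound the per-sample factor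
  have hI : (∫ z, Real.exp (l * (Y z - p)) ∂D) =
      Real.exp (-(l * p)) * (1 + (Real.exp l - 1) * A + (Real.exp (-l) - 1) * B) := by
    have hpt : ∀ z, Real.exp (l * (Y z - p)) = Real.exp (-(l * p)) *
        (1 + (Real.exp l - 1) * max (Y z) 0 + (Real.exp (-l) - 1) * max (-Y z) 0) := by
      intro z
      rcases hv z with h | h | h <;> rw [h] <;> norm_num <;> rw [← Real.exp_add] <;>
        congr 1 <;> ring
    calc (∫ z, Real.exp (l * (Y z - p)) ∂D)
        = ∫ z, Real.exp (-(l * p)) *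
            (1 + (Real.exp l - 1) * max (Y z) 0 + (Real.exp (-l) - 1) * max (-Y z) 0) ∂D :=
          integral_congr_ae (ae_of_all _ hpt)
      _ = Real.exp (-(l * p)) * (1 + (Real.exp l - 1) * A + (Real.exp (-l) - 1) * B) := by
          have i1 : Integrable (fun z => 1 + (Real.exp l - 1) * max (Y z) 0) D :=
            (integrable_const 1).add (hAint.const_mul _)
          rw [MeasureTheory.integral_const_mul,
            integral_add i1 (hBint.const_mul _),
            integral_add (integrable_const (1 : ℝ)) (hAint.const_mul _),
            MeasureTheory.integral_const_mul, MeasureTheory.integral_const_mul, integral_const]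
          simp [hAdef, hBdef]
  have hbase : Real.exp (-(l * t)) * (∫ z, Real.exp (l * (Y z - p)) ∂D) ≤
      Real.exp (-(t ^ 2 / (8 * u))) := by
    rw [hI]
    have h1x : (1 : ℝ) + (Real.exp l - 1) * A + (Real.exp (-l) - 1) * B ≤
        Real.exp ((Real.exp l - 1) * A + (Real.exp (-l) - 1) * B) := by
      have := Real.add_one_le_exp ((Real.exp l - 1) * A + (Real.exp (-l) - 1) * B)
      linarith
    have hchain : Real.exp (-(l * t)) * (Real.exp (-(l * p)) *
        (1 + (Real.exp l - 1) * A + (Real.exp (-l) - 1) * B)) ≤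
        Real.exp (-(l * t) + -(l * p) + ((Real.exp l - 1) * A + (Real.exp (-l) - 1) * B)) := by
      rw [Real.exp_add, Real.exp_add]
      have h0 : (0 : ℝ) ≤ Real.exp (-(l * t)) * Real.exp (-(l * p)) := by positivity
      calc Real.exp (-(l * t)) * (Real.exp (-(l * p)) *
            (1 + (Real.exp l - 1) * A + (Real.exp (-l) - 1) * B))
          = Real.exp (-(l * t)) * Real.exp (-(l * p)) *
            (1 + (Real.exp l - 1) * A + (Real.exp (-l) - 1) * B) := by ring
        _ ≤ Real.exp (-(l * t)) * Real.exp (-(l * p)) *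
            Real.exp ((Real.exp l - 1) * A + (Real.exp (-l) - 1) * B) :=
            mul_le_mul_of_nonneg_left h1x h0
    refine hchain.trans (Real.exp_le_exp.mpr ?_)
    -- exponent bound
    have e1 := exp_quad_upper hl0 hl2
    have e2 := exp_neg_quad_upper hl0
    have hexp : -(l * t) + -(l * p) + ((Real.exp l - 1) * A + (Real.exp (-l) - 1) * B) =
        (Real.exp l - 1 - l) * A + (Real.exp (-l) - 1 + l) * B - l * t := by
      rw [hpAB]; ring
    rw [hexp]
    have hb1 : (Real.exp l - 1 - l) * A ≤ 2 * l ^ 2 * A := mul_le_mul_of_nonneg_right e1 hA0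
    have hb2 : (Real.exp (-l) - 1 + l) * B ≤ 2 * l ^ 2 * B := mul_le_mul_of_nonneg_right e2 hB0
    have hsum : 2 * l ^ 2 * A + 2 * l ^ 2 * B ≤ 2 * l ^ 2 * u := by nlinarith [sq_nonneg l]
    have hfinal : 2 * l ^ 2 * u - l * t = -(t ^ 2 / (8 * u)) := by
      rw [hldef]; field_simp; ring
    linarith
  have hbase0 : 0 ≤ Real.exp (-(l * t)) * (∫ z, Real.exp (l * (Y z - p)) ∂D) := by
    have : 0 ≤ ∫ z, Real.exp (l * (Y z - p)) ∂D := integral_nonneg fun z => (Real.exp_pos _).le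
    positivity
  calc (Real.exp (-(l * t)) * ∫ z, Real.exp (l * (Y z - p)) ∂D) ^ n
      ≤ (Real.exp (-(t ^ 2 / (8 * u)))) ^ n := pow_le_pow_left₀ hbase0 hbase n
    _ = Real.exp (-((n : ℝ) * t ^ 2 / (8 * u))) := by
        rw [← Real.exp_nat_mul]; congr 1; ring

lemma habsY_lemma {Z : Type*} [MeasurableSpace Z] (D : Measure Z) [IsProbabilityMeasure D]
    (f g : Z → ℝ) (hf : Measurable f) (hg : Measurable g)
    (hvf : ∀ z, f z = 0 ∨ f z = 1) (hvg : ∀ z, g z = 0 ∨ g z = 1)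
    (η : ℝ) (hag : η ≤ (D {z | f z = g z}).toReal) :
    (∫ z, |f z - g z| ∂D) ≤ 1 - η := by
  have hset : MeasurableSet {z | f z = g z} := measurableSet_eq_fun hf hg
  have hpt : ∀ z, |f z - g z| =
      ({z | f z = g z}ᶜ : Set Z).indicator (1 : Z → ℝ) z := by
    intro z
    by_cases h : f z = g z
    · rw [Set.indicator_of_notMem (by simpa using h), h, sub_self, abs_zero]
    · rw [Set.indicator_of_mem (by simpa using h)]
      rcases hvf z with h1 | h1 <;> rcases hvg z with h2 | h2 <;>
        first
          | exact absurd (h1.trans h2.symm) h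
          | (rw [h1, h2]; norm_num)
  calc (∫ z, |f z - g z| ∂D)
      = ∫ z, ({z | f z = g z}ᶜ : Set Z).indicator (1 : Z → ℝ) z ∂D :=
        integral_congr_ae (ae_of_all _ hpt)
    _ = (D ({z | f z = g z}ᶜ)).toReal := by
        rw [MeasureTheory.integral_indicator_one hset.compl, measureReal_def]
    _ ≤ 1 - η := by
        rw [measure_compl hset (measure_ne_top D _), measure_univ,
          ENNReal.toReal_sub_of_le prob_le_one ENNReal.one_ne_top]
        simp only [ENNReal.toReal_one]
        linarith [hag]

lemma toReal_union_le {Ω : Type*} [MeasurableSpace Ω] (μ : Measure Ω) [IsFiniteMeasure μ]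
    (A B : Set Ω) : (μ (A ∪ B)).toReal ≤ (μ A).toReal + (μ B).toReal := by
  have h := measure_union_le (μ := μ) A B
  have h2 := ENNReal.toReal_mono (ENNReal.add_ne_top.mpr
    ⟨measure_ne_top μ A, measure_ne_top μ B⟩) h
  rwa [ENNReal.toReal_add (measure_ne_top μ A) (measure_ne_top μ B)] at h2

lemma toReal_biUnion_le {Ω α : Type*} [MeasurableSpace Ω] (μ : Measure Ω) [IsFiniteMeasure μ]
    (s : Finset α) (f : α → Set Ω) :
    (μ (⋃ a ∈ s, f a)).toReal ≤ ∑ a ∈ s, (μ (f a)).toReal := by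
  have h := measure_biUnion_finset_le (μ := μ) s f
  have hne : (∑ a ∈ s, μ (f a)) ≠ ⊤ := by
    refine (ENNReal.sum_lt_top.mpr fun a _ => ?_).ne
    exact measure_lt_top μ (f a)
  have h2 := ENNReal.toReal_mono hne h
  rwa [ENNReal.toReal_sum fun a _ => measure_ne_top μ (f a)] at h2

lemma half_sum (c x : ℝ) (hc : c ≠ 0) : c * (x / (4 * c) + x / (4 * c)) = x / 2 := by
  field_simp; ring

/-- Theorem 1, high-probability form: if `η` is not too close to 1, with
probability `1 - δ` all deviations are at most
`max{√(2 log(4N_η/δ)/n), √(32(1-η) log(4k/δ)/n)}`. -/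
theorem stmt_11 {Z : Type*} [MeasurableSpace Z] (D : Measure Z) [IsProbabilityMeasure D]
    (n k : ℕ) (hn : 0 < n) (hk : 0 < k)
    (q : Fin k → Z → ℝ) (hqmeas : ∀ i, Measurable (q i))
    (hqval : ∀ i z, q i z = 0 ∨ q i z = 1)
    (η δ : ℝ) (hη0 : 0 ≤ η) (hδ : 0 < δ) (hδ1 : δ < 1)
    (M : Finset (Z → ℝ)) (hMmeas : ∀ m ∈ M, Measurable m)
    (hMval : ∀ m ∈ M, ∀ z, m z = 0 ∨ m z = 1)
    (hcover : ∀ i : Fin k, ∃ q' ∈ M, ∃ q'' ∈ M,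
      (∫ z, q' z ∂D) ≤ (∫ z, q i z ∂D) ∧ (∫ z, q i z ∂D) ≤ (∫ z, q'' z ∂D) ∧
      η ≤ (D {z | q' z = q i z}).toReal ∧ η ≤ (D {z | q'' z = q i z}).toReal)
    (hη : η ≤ 1 - max (2 * Real.log (4 * k / δ) / n)
      (Real.sqrt (Real.log (4 * M.card / δ) / (2 * n)))) :
    ((Measure.pi fun _ : Fin n => D)
      {ω | ∀ i : Fin k, |(1 / n : ℝ) * ∑ j, q i (ω j) - ∫ z, q i z ∂D| ≤
        max (Real.sqrt (2 * Real.log (4 * M.card / δ) / n))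
          (Real.sqrt (32 * (1 - η) * Real.log (4 * k / δ) / n))}).toReal ≥ 1 - δ := by
  classical
  set P := Measure.pi fun _ : Fin n => D with hP
  haveI : IsProbabilityMeasure P := by rw [hP]; infer_instance
  set Lc := Real.log (4 * M.card / δ) with hLc
  set Lk := Real.log (4 * k / δ) with hLk
  set u : ℝ := 1 - η with hu
  set a := Real.sqrt (Lc / (2 * n)) with ha
  set t := Real.sqrt (8 * u * Lk / n) with ht
  have hn' : (0 : ℝ) < n := Nat.cast_pos.mpr hn
  have hk' : (1 : ℝ) ≤ k := Nat.one_le_cast.mpr hk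
  have hMne : M.Nonempty := by
    obtain ⟨q', hq', _⟩ := hcover ⟨0, hk⟩
    exact ⟨q', hq'⟩
  have hN1 : (1 : ℝ) ≤ M.card := Nat.one_le_cast.mpr (Finset.card_pos.mpr hMne)
  have hLk0 : 0 < Lk := Real.log_pos (by
    rw [lt_div_iff₀ hδ]; nlinarith)
  have hLc0 : 0 < Lc := Real.log_pos (by
    rw [lt_div_iff₀ hδ]; nlinarith)
  have hu2 : 2 * Lk / n ≤ u := by
    have h1 : max (2 * Lk / n) (Real.sqrt (Lc / (2 * n))) ≤ 1 - η := by linarith [hη]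
    exact le_trans (le_max_left _ _) h1
  have hu0 : 0 < u := lt_of_lt_of_le (by positivity) hu2
  have ha0 : 0 ≤ a := Real.sqrt_nonneg _
  have ht0 : 0 ≤ t := Real.sqrt_nonneg _
  have ht2u : t ≤ 2 * u := by
    have h1 : 8 * u * Lk / n ≤ (2 * u) ^ 2 := by
      have h2 : 4 * u * (2 * Lk / n) ≤ 4 * u * u :=
        mul_le_mul_of_nonneg_left hu2 (by positivity)
      calc 8 * u * Lk / n = 4 * u * (2 * Lk / n) := by ring
        _ ≤ 4 * u * u := h2
        _ = (2 * u) ^ 2 := by ring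
    calc t ≤ Real.sqrt ((2 * u) ^ 2) := Real.sqrt_le_sqrt h1
      _ = 2 * u := Real.sqrt_sq (by positivity)
  have ha2 : a ^ 2 = Lc / (2 * n) := Real.sq_sqrt (by positivity)
  have ht2 : t ^ 2 = 8 * u * Lk / n := Real.sq_sqrt (by positivity)
  -- individual tail probabilities
  have hexpc : Real.exp (-(2 * n * a ^ 2)) = δ / (4 * M.card) := by
    rw [ha2]
    have : 2 * (n : ℝ) * (Lc / (2 * n)) = Lc := by field_simp
    have h4 : (0 : ℝ) < 4 * M.card / δ := by positivity
    rw [this, hLc, Real.exp_neg, Real.exp_log h4, inv_div]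
  have hexpk : Real.exp (-((n : ℝ) * t ^ 2 / (8 * u))) = δ / (4 * k) := by
    rw [ht2]
    have : (n : ℝ) * (8 * u * Lk / n) / (8 * u) = Lk := by field_simp
    have h4 : (0 : ℝ) < 4 * k / δ := by positivity
    rw [this, hLk, Real.exp_neg, Real.exp_log h4, inv_div]
  -- choose cover functions
  choose q1 hq1M q2 hq2M hle1 hle2 hag1 hag2 using hcover
  -- integrability facts
  have hqint : ∀ (f : Z → ℝ), Measurable f → (∀ z, f z = 0 ∨ f z = 1) → Integrable f D := by
    intro f hf hv
    refine bdd_integrable D hf 1 fun z => ?_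
    rcases hv z with h | h <;> rw [h] <;> norm_num
  -- event sets
  set S1 : (Z → ℝ) → Set (Fin n → Z) :=
    fun m => {ω | (n : ℝ) * a ≤ ∑ j, (m (ω j) - ∫ z, m z ∂D)} with hS1
  set S2 : (Z → ℝ) → Set (Fin n → Z) :=
    fun m => {ω | (n : ℝ) * a ≤ ∑ j, ((1 - m (ω j)) - ∫ z, (1 - m z) ∂D)} with hS2
  set T1 : Fin k → Set (Fin n → Z) :=
    fun i => {ω | (n : ℝ) * t ≤
      ∑ j, ((q i (ω j) - q1 i (ω j)) - ∫ z, (q i z - q1 i z) ∂D)} with hT1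
  set T2 : Fin k → Set (Fin n → Z) :=
    fun i => {ω | (n : ℝ) * t ≤
      ∑ j, ((q2 i (ω j) - q i (ω j)) - ∫ z, (q2 i z - q i z) ∂D)} with hT2
  -- measurability of events
  have hmeas_ev : ∀ (g : Z → ℝ) (s : ℝ), Measurable g →
      MeasurableSet {ω : Fin n → Z | (n : ℝ) * s ≤ ∑ j, (g (ω j) - ∫ z, g z ∂D)} := by
    intro g s hg
    exact measurableSet_le measurable_const
      (Finset.measurable_sum _ fun j _ => ((hg.comp (measurable_pi_apply j)).sub_const _))
  have hS1meas : ∀ m ∈ M, MeasurableSet (S1 m) := fun m hm => hmeas_ev m a (hMmeas m hm)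
  have hS2meas : ∀ m ∈ M, MeasurableSet (S2 m) := by
    intro m hm
    exact hmeas_ev (fun z => 1 - m z) a ((hMmeas m hm).const_sub 1)
  have hT1meas : ∀ i, MeasurableSet (T1 i) := fun i =>
    hmeas_ev (fun z => q i z - q1 i z) t ((hqmeas i).sub (hMmeas _ (hq1M i)))
  have hT2meas : ∀ i, MeasurableSet (T2 i) := fun i =>
    hmeas_ev (fun z => q2 i z - q i z) t ((hMmeas _ (hq2M i)).sub (hqmeas i))
  set bad : Set (Fin n → Z) :=
    (⋃ m ∈ M, (S1 m ∪ S2 m)) ∪ (⋃ i ∈ (Finset.univ : Finset (Fin k)), (T1 i ∪ T2 i)) with hbad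
  have hbadmeas : MeasurableSet bad := by
    refine MeasurableSet.union ?_ ?_
    · exact Finset.measurableSet_biUnion M fun m hm => (hS1meas m hm).union (hS2meas m hm)
    · exact Finset.measurableSet_biUnion _ fun i _ => (hT1meas i).union (hT2meas i)
  -- bounds on individual events
  have hS1bd : ∀ m ∈ M, (P (S1 m)).toReal ≤ δ / (4 * M.card) := by
    intro m hm
    rw [← hexpc]
    exact cover_tail D n m (hMmeas m hm) (hMval m hm) a ha0
  have hS2bd : ∀ m ∈ M, (P (S2 m)).toReal ≤ δ / (4 * M.card) := by
    intro m hm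
    rw [← hexpc]
    exact cover_tail D n (fun z => 1 - m z) ((hMmeas m hm).const_sub 1)
      (fun z => by
        show 1 - m z = 0 ∨ 1 - m z = 1
        rcases hMval m hm z with h | h <;> rw [h] <;> norm_num) a ha0
  have habsY : ∀ (f g : Z → ℝ), Measurable f → Measurable g →
      (∀ z, f z = 0 ∨ f z = 1) → (∀ z, g z = 0 ∨ g z = 1) →
      η ≤ (D {z | f z = g z}).toReal → (∫ z, |f z - g z| ∂D) ≤ u := by
    intro f g hf hg hvf hvg hag
    exact habsY_lemma D f g hf hg hvf hvg η hag
  have hYval : ∀ (f g : Z → ℝ), (∀ z, f z = 0 ∨ f z = 1) → (∀ z, g z = 0 ∨ g z = 1) →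
      ∀ z, f z - g z = -1 ∨ f z - g z = 0 ∨ f z - g z = 1 := by
    intro f g hvf hvg z
    rcases hvf z with h1 | h1 <;> rcases hvg z with h2 | h2 <;> rw [h1, h2] <;> norm_num
  have hT1bd : ∀ i, (P (T1 i)).toReal ≤ δ / (4 * k) := by
    intro i
    rw [← hexpk]
    exact diff_tail D n (fun z => q i z - q1 i z) ((hqmeas i).sub (hMmeas _ (hq1M i)))
      (hYval _ _ (hqval i) (hMval _ (hq1M i)))
      u t hu0
      (by
        have := habsY (q i) (q1 i) (hqmeas i) (hMmeas _ (hq1M i)) (hqval i)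
          (hMval _ (hq1M i)) ?_
        · exact this
        · have := hag1 i
          rwa [show {z | q1 i z = q i z} = {z | q i z = q1 i z} from by
            ext z; exact eq_comm] at this)
      ht0 ht2u
  have hT2bd : ∀ i, (P (T2 i)).toReal ≤ δ / (4 * k) := by
    intro i
    rw [← hexpk]
    exact diff_tail D n (fun z => q2 i z - q i z) ((hMmeas _ (hq2M i)).sub (hqmeas i))
      (hYval _ _ (hMval _ (hq2M i)) (hqval i))
      u t hu0
      (habsY (q2 i) (q i) (hMmeas _ (hq2M i)) (hqmeas i) (hMval _ (hq2M i)) (hqval i)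
        (hag2 i))
      ht0 ht2u
  -- union bound
  have hunion : (P bad).toReal ≤ δ := by
    have hcN : (M.card : ℝ) ≠ 0 := by linarith
    have hck : (k : ℝ) ≠ 0 := by linarith
    calc (P bad).toReal
        ≤ (P (⋃ m ∈ M, (S1 m ∪ S2 m))).toReal +
          (P (⋃ i ∈ (Finset.univ : Finset (Fin k)), (T1 i ∪ T2 i))).toReal :=
          toReal_union_le P _ _
      _ ≤ (∑ m ∈ M, (P (S1 m ∪ S2 m)).toReal) +
          (∑ i ∈ (Finset.univ : Finset (Fin k)), (P (T1 i ∪ T2 i)).toReal) :=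
          add_le_add (toReal_biUnion_le P M _) (toReal_biUnion_le P Finset.univ _)
      _ ≤ (∑ _m ∈ M, (δ / (4 * M.card) + δ / (4 * M.card))) +
          (∑ _i ∈ (Finset.univ : Finset (Fin k)), (δ / (4 * k) + δ / (4 * k))) := by
          refine add_le_add (Finset.sum_le_sum fun m hm => ?_)
            (Finset.sum_le_sum fun i _ => ?_)
          · exact (toReal_union_le P _ _).trans (add_le_add (hS1bd m hm) (hS2bd m hm))
          · exact (toReal_union_le P _ _).trans (add_le_add (hT1bd i) (hT2bd i))
      _ = δ := by
          rw [Finset.sum_const, Finset.sum_const, Finset.card_univ, Fintype.card_fin,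
            nsmul_eq_mul, nsmul_eq_mul, half_sum _ _ hcN, half_sum _ _ hck]
          ring
  -- relations between the bounds
  have hsqrt4 : Real.sqrt 4 = 2 := by
    rw [show (4 : ℝ) = 2 ^ 2 by norm_num, Real.sqrt_sq (by norm_num : (0:ℝ) ≤ 2)]
  have hB1 : Real.sqrt (2 * Lc / n) = 2 * a := by
    rw [ha, show 2 * Lc / (n : ℝ) = 4 * (Lc / (2 * n)) by field_simp; ring,
      Real.sqrt_mul (by norm_num : (0:ℝ) ≤ 4), hsqrt4]
  have hB2 : Real.sqrt (32 * u * Lk / n) = 2 * t := by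
    rw [ht, show 32 * u * Lk / (n : ℝ) = 4 * (8 * u * Lk / n) by field_simp; ring,
      Real.sqrt_mul (by norm_num : (0:ℝ) ≤ 4), hsqrt4]
  -- inclusion of the good event
  have hincl : badᶜ ⊆ {ω : Fin n → Z | ∀ i : Fin k,
      |(1 / n : ℝ) * ∑ j, q i (ω j) - ∫ z, q i z ∂D| ≤
        max (Real.sqrt (2 * Lc / n)) (Real.sqrt (32 * u * Lk / n))} := by
    intro ω hω
    have hnotS : ∀ m ∈ M, ω ∉ S1 m ∧ ω ∉ S2 m := by
      intro m hm
      constructor <;> intro hmem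
      · exact hω (Set.mem_union_left _ (Set.mem_biUnion hm (Set.mem_union_left _ hmem)))
      · exact hω (Set.mem_union_left _ (Set.mem_biUnion hm (Set.mem_union_right _ hmem)))
    have hnotT : ∀ i : Fin k, ω ∉ T1 i ∧ ω ∉ T2 i := by
      intro i
      constructor <;> intro hmem
      · exact hω (Set.mem_union_right _
          (Set.mem_biUnion (Finset.mem_univ i) (Set.mem_union_left _ hmem)))
      · exact hω (Set.mem_union_right _
          (Set.mem_biUnion (Finset.mem_univ i) (Set.mem_union_right _ hmem)))
    intro i
    -- notation
    have hint1 : Integrable (q1 i) D := hqint _ (hMmeas _ (hq1M i)) (hMval _ (hq1M i))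
    have hint2 : Integrable (q2 i) D := hqint _ (hMmeas _ (hq2M i)) (hMval _ (hq2M i))
    have hintq : Integrable (q i) D := hqint _ (hqmeas i) (hqval i)
    have hIc1 : (∫ z, (1 - q1 i z) ∂D) = 1 - ∫ z, q1 i z ∂D := by
      rw [integral_sub (integrable_const 1) hint1]; simp
    have hIc2 : (∫ z, (1 - q2 i z) ∂D) = 1 - ∫ z, q2 i z ∂D := by
      rw [integral_sub (integrable_const 1) hint2]; simp
    have hIT1 : (∫ z, (q i z - q1 i z) ∂D) = (∫ z, q i z ∂D) - ∫ z, q1 i z ∂D :=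
      integral_sub hintq hint1
    have hIT2 : (∫ z, (q2 i z - q i z) ∂D) = (∫ z, q2 i z ∂D) - ∫ z, q i z ∂D :=
      integral_sub hint2 hintq
    obtain ⟨hS1a, hS1b⟩ := hnotS _ (hq1M i)
    obtain ⟨hS2a, hS2b⟩ := hnotS _ (hq2M i)
    obtain ⟨hT1a, hT2a⟩ := hnotT i
    rw [hS1, Set.mem_setOf_eq, not_le, Finset.sum_sub_distrib, Finset.sum_const,
      Finset.card_univ, Fintype.card_fin, nsmul_eq_mul] at hS1a hS2a
    rw [hS2, Set.mem_setOf_eq, not_le, hIc1, Finset.sum_sub_distrib, Finset.sum_const,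
      Finset.card_univ, Fintype.card_fin, nsmul_eq_mul] at hS1b
    rw [hS2, Set.mem_setOf_eq, not_le, hIc2, Finset.sum_sub_distrib, Finset.sum_const,
      Finset.card_univ, Fintype.card_fin, nsmul_eq_mul] at hS2b
    rw [hT1, Set.mem_setOf_eq, not_le, hIT1, Finset.sum_sub_distrib, Finset.sum_const,
      Finset.card_univ, Fintype.card_fin, nsmul_eq_mul] at hT1a
    rw [hT2, Set.mem_setOf_eq, not_le, hIT2, Finset.sum_sub_distrib, Finset.sum_const,
      Finset.card_univ, Fintype.card_fin, nsmul_eq_mul] at hT2a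
    have hsplit1 : ∑ j : Fin n, (1 - q1 i (ω j)) = n - ∑ j : Fin n, q1 i (ω j) := by
      rw [Finset.sum_sub_distrib, Finset.sum_const, Finset.card_univ, Fintype.card_fin,
        nsmul_eq_mul, mul_one]
    have hsplit2 : ∑ j : Fin n, (1 - q2 i (ω j)) = n - ∑ j : Fin n, q2 i (ω j) := by
      rw [Finset.sum_sub_distrib, Finset.sum_const, Finset.card_univ, Fintype.card_fin,
        nsmul_eq_mul, mul_one]
    rw [hsplit1] at hS1b
    rw [hsplit2] at hS2b
    have hsplit3 : ∑ j : Fin n, (q i (ω j) - q1 i (ω j)) =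
        (∑ j : Fin n, q i (ω j)) - ∑ j : Fin n, q1 i (ω j) := by rw [Finset.sum_sub_distrib]
    have hsplit4 : ∑ j : Fin n, (q2 i (ω j) - q i (ω j)) =
        (∑ j : Fin n, q2 i (ω j)) - ∑ j : Fin n, q i (ω j) := by rw [Finset.sum_sub_distrib]
    rw [hsplit3] at hT1a
    rw [hsplit4] at hT2a
    -- assemble
    set Sq := ∑ j : Fin n, q i (ω j) with hSq
    set pI := ∫ z, q i z ∂D with hpI
    have habs : |Sq - n * pI| < n * t + n * a := by
      rw [abs_lt]
      constructor <;> linarith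
    have he : (1 / n : ℝ) * Sq - pI = (Sq - n * pI) / n := by field_simp
    have habs2 : |(1 / n : ℝ) * Sq - pI| ≤ t + a := by
      rw [he, abs_div, abs_of_pos hn', div_le_iff₀ hn']
      have hee : (t + a) * (n : ℝ) = n * t + n * a := by ring
      rw [hee]
      exact habs.le
    refine habs2.trans ?_
    rw [hB1, hB2]
    rcases le_total a t with h | h
    · exact le_trans (by linarith) (le_max_right (2 * a) (2 * t))
    · exact le_trans (by linarith) (le_max_left (2 * a) (2 * t))
  have hgoodmeas := hbadmeas.compl
  have hcompl : (P bad).toReal + (P badᶜ).toReal = 1 := by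
    have h := measure_add_measure_compl (μ := P) hbadmeas
    rw [measure_univ] at h
    have := congrArg ENNReal.toReal h
    rwa [ENNReal.toReal_add (measure_ne_top _ _) (measure_ne_top _ _),
      ENNReal.toReal_one] at this
  have hmono : (P badᶜ).toReal ≤ (P {ω : Fin n → Z | ∀ i : Fin k,
      |(1 / n : ℝ) * ∑ j, q i (ω j) - ∫ z, q i z ∂D| ≤
        max (Real.sqrt (2 * Lc / n)) (Real.sqrt (32 * u * Lk / n))}).toReal :=
    ENNReal.toReal_mono (measure_ne_top _ _) (measure_mono hincl)
  calc 1 - δ ≤ (P badᶜ).toReal := by linarith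
    _ ≤ _ := hmono
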